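/- For positive integers d, n, a with a < (d+3)/2, the number of partitions with perimeter n whose parts are ≡ ±a (mod d+4) is at most the number of partitions with perimeter n whose parts are ≡ ±a (mod d+3). -/

import Mathlib

/-- A partition: a nonempty, nonincreasing list of positive integers. -/
def IsPartition (l : List ℕ) : Prop :=
  l ≠ [] ∧ l.Pairwise (· ≥ ·) ∧ ∀ x ∈ l, 0 < x

/-- Perimeter: (largest part) + (number of parts) - 1. -/
def perimeter (l : List ℕ) : ℕ := l.headI + l.length - 1

/-- d-distinct: consecutive parts differ by at least d. -/
def DDistinct (d : ℕ) (l : List ℕ) : Prop := l.Chain' (fun x y => y + d ≤ x)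

/-- The part-shrinking map from residues mod (d+4) to residues mod (d+3). -/
def pmap (d a x : ℕ) : ℕ :=
  if x % (d + 4) = a then a + x / (d + 4) * (d + 3)
  else (x + a) / (d + 4) * (d + 3) - a

/-- Representation lemma. -/
lemma pmap_rep (d a x : ℕ) (ha : 0 < a) (h2 : 2 * a < d + 3) (hx : 0 < x)
    (hc : x % (d + 4) = a % (d + 4) ∨ (x + a) % (d + 4) = 0) :
    (∃ k, x = k * (d + 4) + a ∧ pmap d a x = k * (d + 3) + a) ∨
    (∃ k, x + a = (k + 1) * (d + 4) ∧ pmap d a x + a = (k + 1) * (d + 3)) := by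
  have haa : a % (d + 4) = a := Nat.mod_eq_of_lt (by omega)
  by_cases hcase : x % (d + 4) = a
  · left
    refine ⟨x / (d + 4), ?_, ?_⟩
    · conv_lhs => rw [← Nat.div_add_mod x (d + 4)]
      rw [hcase, Nat.mul_comm]
    · simp [pmap, hcase, Nat.add_comm]
  · right
    have hc2 : (x + a) % (d + 4) = 0 := by
      rcases hc with hc | hc
      · exact absurd (hc.trans haa) hcase
      · exact hc
    have hdvd : (d + 4) ∣ (x + a) := Nat.dvd_of_mod_eq_zero hc2
    have hq : (x + a) / (d + 4) * (d + 4) = x + a := Nat.div_mul_cancel hdvd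
    have hqpos : 0 < (x + a) / (d + 4) := by
      rcases Nat.eq_zero_or_pos ((x + a) / (d + 4)) with h0 | h0
      · rw [h0] at hq; omega
      · exact h0
    refine ⟨(x + a) / (d + 4) - 1, ?_, ?_⟩
    · rw [Nat.sub_add_cancel hqpos]; omega
    · have : pmap d a x = (x + a) / (d + 4) * (d + 3) - a := by
        simp [pmap, hcase]
      rw [this, Nat.sub_add_cancel hqpos]
      have h3 : d + 3 ≤ (x + a) / (d + 4) * (d + 3) :=
        Nat.le_mul_of_pos_left _ hqpos
      omega

lemma mulm {k j : ℕ} (c : ℕ) (h : k ≤ j) : k * c ≤ j * c := Nat.mul_le_mul_right _ h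

lemma pmap_strictMono (d a x y : ℕ) (ha : 0 < a) (h2 : 2 * a < d + 3) (hx : 0 < x) (hy : 0 < y)
    (hcx : x % (d + 4) = a % (d + 4) ∨ (x + a) % (d + 4) = 0)
    (hcy : y % (d + 4) = a % (d + 4) ∨ (y + a) % (d + 4) = 0)
    (hxy : x < y) : pmap d a x < pmap d a y := by
  rcases pmap_rep d a x ha h2 hx hcx with ⟨k, hk1, hk2⟩ | ⟨k, hk1, hk2⟩ <;>
    rcases pmap_rep d a y ha h2 hy hcy with ⟨j, hj1, hj2⟩ | ⟨j, hj1, hj2⟩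
  · have hkj : k + 1 ≤ j := by
      by_contra hh
      have := mulm (d + 4) (show j ≤ k by omega)
      omega
    have h3 := mulm (d + 3) hkj
    have h4 : (k + 1) * (d + 3) = k * (d + 3) + (d + 3) := by ring
    omega
  · have hkj : k ≤ j := by
      by_contra hh
      have := mulm (d + 4) (show j + 1 ≤ k by omega)
      omega
    have h3 := mulm (d + 3) (show k + 1 ≤ j + 1 by omega)
    have h4 : (k + 1) * (d + 3) = k * (d + 3) + (d + 3) := by ring
    omega
  · have hkj : k + 1 ≤ j := by
      by_contra hh
      have := mulm (d + 4) (show j ≤ k by omega)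
      have h4 : (k + 1) * (d + 4) = k * (d + 4) + (d + 4) := by ring
      omega
    have h3 := mulm (d + 3) hkj
    omega
  · have hkj : k + 1 ≤ j := by
      by_contra hh
      have := mulm (d + 4) (show j + 1 ≤ k + 1 by omega)
      omega
    have h3 := mulm (d + 3) (show k + 2 ≤ j + 1 by omega)
    have h4 : (k + 2) * (d + 3) = (k + 1) * (d + 3) + (d + 3) := by ring
    omega

lemma pmap_le (d a x : ℕ) (ha : 0 < a) (h2 : 2 * a < d + 3) (hx : 0 < x)
    (hcx : x % (d + 4) = a % (d + 4) ∨ (x + a) % (d + 4) = 0) : pmap d a x ≤ x := by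
  rcases pmap_rep d a x ha h2 hx hcx with ⟨k, hk1, hk2⟩ | ⟨k, hk1, hk2⟩
  · have h3 : k * (d + 3) ≤ k * (d + 4) := Nat.mul_le_mul_left k (by omega)
    omega
  · have h3 : (k + 1) * (d + 3) ≤ (k + 1) * (d + 4) := Nat.mul_le_mul_left _ (by omega)
    omega

lemma pmap_ge (d a x : ℕ) (ha : 0 < a) (h2 : 2 * a < d + 3) (hx : 0 < x)
    (hcx : x % (d + 4) = a % (d + 4) ∨ (x + a) % (d + 4) = 0) : a ≤ pmap d a x := by
  rcases pmap_rep d a x ha h2 hx hcx with ⟨k, hk1, hk2⟩ | ⟨k, hk1, hk2⟩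
  · omega
  · have h3 : d + 3 ≤ (k + 1) * (d + 3) := Nat.le_mul_of_pos_left _ (by omega)
    omega

lemma pmap_cond (d a x : ℕ) (ha : 0 < a) (h2 : 2 * a < d + 3) (hx : 0 < x)
    (hcx : x % (d + 4) = a % (d + 4) ∨ (x + a) % (d + 4) = 0) :
    pmap d a x % (d + 3) = a % (d + 3) ∨ (pmap d a x + a) % (d + 3) = 0 := by
  rcases pmap_rep d a x ha h2 hx hcx with ⟨k, hk1, hk2⟩ | ⟨k, hk1, hk2⟩
  · left; rw [hk2, Nat.add_comm, Nat.add_mul_mod_self_right]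
  · right; rw [hk2, Nat.mul_mod_left]

lemma pmap_inj (d a x y : ℕ) (ha : 0 < a) (h2 : 2 * a < d + 3) (hx : 0 < x) (hy : 0 < y)
    (hcx : x % (d + 4) = a % (d + 4) ∨ (x + a) % (d + 4) = 0)
    (hcy : y % (d + 4) = a % (d + 4) ∨ (y + a) % (d + 4) = 0)
    (hxy : pmap d a x = pmap d a y) : x = y := by
  rcases lt_trichotomy x y with hlt | he | hlt
  · exact absurd hxy (Nat.ne_of_lt (pmap_strictMono d a x y ha h2 hx hy hcx hcy hlt))
  · exact he
  · exact absurd hxy.symm (Nat.ne_of_lt (pmap_strictMono d a y x ha h2 hy hx hcy hcx hlt))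

lemma map_pmap_inj (d a : ℕ) (ha : 0 < a) (h2 : 2 * a < d + 3) :
    ∀ l₁ l₂ : List ℕ,
      (∀ x ∈ l₁, 0 < x ∧ (x % (d + 4) = a % (d + 4) ∨ (x + a) % (d + 4) = 0)) →
      (∀ x ∈ l₂, 0 < x ∧ (x % (d + 4) = a % (d + 4) ∨ (x + a) % (d + 4) = 0)) →
      l₁.map (pmap d a) = l₂.map (pmap d a) → l₁ = l₂ := by
  intro l₁
  induction l₁ with
  | nil => intro l₂ _ _ hm; simpa using (List.map_eq_nil_iff.mp hm.symm).symm
  | cons x t ih =>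
    intro l₂ h1 h2' hm
    cases l₂ with
    | nil => simp at hm
    | cons y s =>
      simp only [List.map_cons, List.cons.injEq] at hm
      obtain ⟨hx, hcx⟩ := h1 x (by simp)
      obtain ⟨hy, hcy⟩ := h2' y (by simp)
      have hxy := pmap_inj d a x y ha h2 hx hy hcx hcy hm.1
      have := ih s (fun z hz => h1 z (by simp [hz])) (fun z hz => h2' z (by simp [hz])) hm.2
      rw [hxy, this]

lemma headI_mem' {l : List ℕ} (h : l ≠ []) : l.headI ∈ l := by
  cases l with
  | nil => exact absurd rfl h
  | cons b t => simp

lemma mem_le_headI {l : List ℕ} (hs : l.Pairwise (· ≥ ·)) {x : ℕ} (hx : x ∈ l) :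
    x ≤ l.headI := by
  cases l with
  | nil => simp at hx
  | cons b t =>
    rcases List.mem_cons.mp hx with rfl | hx
    · simp
    · exact List.rel_of_pairwise_cons hs hx

lemma part_finite (n : ℕ) (C : List ℕ → Prop) :
    Finite {l : List ℕ // IsPartition l ∧ perimeter l = n ∧ C l} := by
  have key : ∀ l : {l : List ℕ // IsPartition l ∧ perimeter l = n ∧ C l},
      (l : List ℕ).length ≤ n ∧ ∀ x ∈ (l : List ℕ), 0 < x ∧ x ≤ n := by
    rintro ⟨l, ⟨hne, hs, hpos⟩, hper, _⟩
    have hL : 0 < l.length := List.length_pos_iff.mpr hne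
    have hh : 0 < l.headI := hpos _ (headI_mem' hne)
    have hhn : l.headI ≤ n ∧ l.length ≤ n := by
      unfold perimeter at hper; omega
    exact ⟨hhn.2, fun x hx => ⟨hpos x hx, le_trans (mem_le_headI hs hx) hhn.1⟩⟩
  apply Finite.of_injective
    (fun l : {l : List ℕ // IsPartition l ∧ perimeter l = n ∧ C l} =>
      (fun i : Fin n => (⟨(l : List ℕ).getD i 0, by
        rcases Nat.lt_or_ge (i : ℕ) (l : List ℕ).length with hi | hi
        · rw [List.getD_eq_getElem _ _ hi]
          have := (key l).2 _ (List.getElem_mem hi)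
          omega
        · rw [List.getD_eq_default _ _ hi]; omega⟩ : Fin (n + 1))))
  intro l₁ l₂ hf
  have hf' : ∀ i : ℕ, i < n → (l₁ : List ℕ).getD i 0 = (l₂ : List ℕ).getD i 0 := by
    intro i hi
    have := congrFun hf ⟨i, hi⟩
    simpa using this
  have hlen : (l₁ : List ℕ).length = (l₂ : List ℕ).length := by
    by_contra hne
    rcases Nat.lt_or_ge (l₁ : List ℕ).length (l₂ : List ℕ).length with hlt | hge
    · have h1 := (key l₂).1
      have hi : (l₁ : List ℕ).length < n := by omega
      have he := hf' _ hi
      rw [List.getD_eq_default _ _ (le_refl _)] at he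
      rw [List.getD_eq_getElem _ _ hlt] at he
      have := ((key l₂).2 _ (List.getElem_mem hlt)).1
      omega
    · have hlt : (l₂ : List ℕ).length < (l₁ : List ℕ).length := by omega
      have hi : (l₂ : List ℕ).length < n := by
        have := (key l₁).1; omega
      have he := hf' _ hi
      rw [List.getD_eq_default _ _ (le_refl _)] at he
      rw [List.getD_eq_getElem _ _ hlt] at he
      have := ((key l₁).2 _ (List.getElem_mem hlt)).1
      omega
  apply Subtype.ext
  apply List.ext_getElem hlen
  intro i h1 h2
  have hi : i < n := by have := (key l₁).1; omega
  have := hf' i hi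
  rwa [List.getD_eq_getElem _ _ h1, List.getD_eq_getElem _ _ h2] at this

theorem stmt15 (d n a : ℕ) (hd : 0 < d) (hn : 0 < n) (ha : 0 < a) (h : 2 * a < d + 3) :
    Nat.card {l : List ℕ // IsPartition l ∧ perimeter l = n ∧
        ∀ x ∈ l, x % (d + 4) = a % (d + 4) ∨ (x + a) % (d + 4) = 0}
      ≤ Nat.card {l : List ℕ // IsPartition l ∧ perimeter l = n ∧
          ∀ x ∈ l, x % (d + 3) = a % (d + 3) ∨ (x + a) % (d + 3) = 0} := by
  haveI : Finite {l : List ℕ // IsPartition l ∧ perimeter l = n ∧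
      ∀ x ∈ l, x % (d + 3) = a % (d + 3) ∨ (x + a) % (d + 3) = 0} :=
    part_finite n _
  -- the list-level map
  have main : ∀ l : List ℕ, IsPartition l → perimeter l = n →
      (∀ x ∈ l, x % (d + 4) = a % (d + 4) ∨ (x + a) % (d + 4) = 0) →
      IsPartition (l.map (pmap d a) ++ List.replicate (l.headI - (pmap d a) l.headI) a) ∧
        perimeter (l.map (pmap d a) ++ List.replicate (l.headI - (pmap d a) l.headI) a) = n ∧
        ∀ x ∈ (l.map (pmap d a) ++ List.replicate (l.headI - (pmap d a) l.headI) a),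
          x % (d + 3) = a % (d + 3) ∨ (x + a) % (d + 3) = 0 := by
    rintro l ⟨hne, hs, hpos⟩ hper hcond
    have hall : ∀ x ∈ l, 0 < x ∧ (x % (d + 4) = a % (d + 4) ∨ (x + a) % (d + 4) = 0) :=
      fun x hx => ⟨hpos x hx, hcond x hx⟩
    have hhmem : l.headI ∈ l := headI_mem' hne
    have hfh : (pmap d a) l.headI ≤ l.headI :=
      pmap_le d a _ ha h (hall _ hhmem).1 (hall _ hhmem).2
    have hmapne : l.map (pmap d a) ≠ [] := by
      simpa using hne
    have hhead : (l.map (pmap d a) ++ List.replicate (l.headI - (pmap d a) l.headI) a).headI = (pmap d a) l.headI := by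
      cases l with
      | nil => exact absurd rfl hne
      | cons b t => simp
    have hLpos : 0 < l.length := List.length_pos_iff.mpr hne
    refine ⟨⟨by simp [hne], ?_, ?_⟩, ?_, ?_⟩
    · -- sorted
      rw [List.pairwise_append]
      refine ⟨?_, ?_, ?_⟩
      · refine List.Pairwise.map (pmap d a) (fun u v huv => huv) ?_
        refine List.Pairwise.imp_of_mem (fun {u v} hu hv huv => ?_) hs
        rcases Nat.eq_or_lt_of_le huv with he | hlt
        · exact le_of_eq (congrArg (pmap d a) he)
        · exact le_of_lt (pmap_strictMono d a v u ha h (hall _ hv).1 (hall _ hu).1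
            (hall _ hv).2 (hall _ hu).2 hlt)
      · simp
      · intro u hu v hv
        obtain ⟨x, hx, rfl⟩ := List.mem_map.mp hu
        have hva := List.eq_of_mem_replicate hv
        rw [hva]
        exact pmap_ge d a x ha h (hall _ hx).1 (hall _ hx).2
    · -- positivity
      intro x hx
      rcases List.mem_append.mp hx with hx | hx
      · obtain ⟨y, hy, rfl⟩ := List.mem_map.mp hx
        have := pmap_ge d a y ha h (hall _ hy).1 (hall _ hy).2
        omega
      · have hxa := List.eq_of_mem_replicate hx
        omega
    · -- perimeter
      unfold perimeter at hper ⊢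
      rw [hhead]
      simp only [List.length_append, List.length_map, List.length_replicate]
      omega
    · -- congruence condition
      intro x hx
      rcases List.mem_append.mp hx with hx | hx
      · obtain ⟨y, hy, rfl⟩ := List.mem_map.mp hx
        exact pmap_cond d a y ha h (hall _ hy).1 (hall _ hy).2
      · rw [List.eq_of_mem_replicate hx]
        left; rfl
  refine Nat.card_le_card_of_injective
    (fun l => ⟨(l : List ℕ).map (pmap d a) ++
        List.replicate ((l : List ℕ).headI - (pmap d a) (l : List ℕ).headI) a,
      main l l.2.1 l.2.2.1 l.2.2.2⟩) ?_
  rintro ⟨l₁, hp₁, hper₁, hc₁⟩ ⟨l₂, hp₂, hper₂, hc₂⟩ heq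
  simp only [Subtype.mk.injEq] at heq ⊢
  have hall₁ : ∀ x ∈ l₁, 0 < x ∧ (x % (d + 4) = a % (d + 4) ∨ (x + a) % (d + 4) = 0) :=
    fun x hx => ⟨hp₁.2.2 x hx, hc₁ x hx⟩
  have hall₂ : ∀ x ∈ l₂, 0 < x ∧ (x % (d + 4) = a % (d + 4) ∨ (x + a) % (d + 4) = 0) :=
    fun x hx => ⟨hp₂.2.2 x hx, hc₂ x hx⟩
  have hne₁ := hp₁.1
  have hne₂ := hp₂.1
  have hh₁ : l₁.headI ∈ l₁ := headI_mem' hne₁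
  have hh₂ : l₂.headI ∈ l₂ := headI_mem' hne₂
  -- heads agree
  have hhead : (pmap d a) l₁.headI = (pmap d a) l₂.headI := by
    have h1 : (l₁.map (pmap d a) ++ List.replicate (l₁.headI - (pmap d a) l₁.headI) a).headI = (pmap d a) l₁.headI := by
      cases l₁ with
      | nil => exact absurd rfl hne₁
      | cons b t => simp
    have h2 : (l₂.map (pmap d a) ++ List.replicate (l₂.headI - (pmap d a) l₂.headI) a).headI = (pmap d a) l₂.headI := by
      cases l₂ with
      | nil => exact absurd rfl hne₂
      | cons b t => simp
    rw [← h1, ← h2, heq]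
  have hheads : l₁.headI = l₂.headI :=
    pmap_inj d a _ _ ha h (hall₁ _ hh₁).1 (hall₂ _ hh₂).1 (hall₁ _ hh₁).2 (hall₂ _ hh₂).2 hhead
  have hlen : (l₁.map (pmap d a)).length = (l₂.map (pmap d a)).length := by
    have := congrArg List.length heq
    simp only [List.length_append, List.length_replicate] at this
    simp only [List.length_map] at this ⊢
    rw [hheads] at this
    omega
  have := List.append_inj heq hlen
  exact map_pmap_inj d a ha h l₁ l₂ hall₁ hall₂ this.1
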